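/- Let x ∈ ℝⁿ with f(x) ≠ 0 and suppose the flow S_t x is defined and f(S_t x) ≠ 0 for all t ≥ 0. Let M be a C¹ function on a neighborhood of the forward orbit of x with values in the symmetric n×n matrices, let φ₁ be a solution of the variational equation φ̇(t) = Df(S_t x)φ(t), and set φ₀(t) := f(S_t x)/‖f(S_t x)‖². Then for all t ≥ 0: d/dt [φ₁(t)^T P_{S_t x}^T M(S_t x) φ₀(t)] = φ₁(t)^T P_{S_t x}^T (LM(S_t x)) φ₀(t), and d/dt [φ₀(t)^T M(S_t x) P_{S_t x} φ₁(t)] = φ₀(t)^T (LM(S_t x)) P_{S_t x} φ₁(t). -/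

import Mathlib

open Matrix Set Filter MeasureTheory

/-- Euclidean norm of a vector in `ℝⁿ`. -/
noncomputable def vecEnorm {n : ℕ} (v : Fin n → ℝ) : ℝ := Real.sqrt (∑ i, v i ^ 2)

/-- Operator norm of a matrix induced by the Euclidean norm. -/
noncomputable def opn {n : ℕ} (A : Matrix (Fin n) (Fin n) ℝ) : ℝ :=
  ‖Matrix.toEuclideanCLM (𝕜 := ℝ) A‖

/-- The projection `P_x = I - f(x)f(x)ᵀ/‖f(x)‖²` onto the hyperplane perpendicular to `f(x)`. -/
noncomputable def Pm {n : ℕ} (f : (Fin n → ℝ) → Fin n → ℝ) (x : Fin n → ℝ) :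
    Matrix (Fin n) (Fin n) ℝ :=
  1 - (vecEnorm (f x) ^ 2)⁻¹ • Matrix.vecMulVec (f x) (f x)

/-- The differential operator
`LM(x) = M′(x) + Df(x)ᵀM(x) + M(x)Df(x) - M(x)f(x)f(x)ᵀ(Df(x)+Df(x)ᵀ)/‖f(x)‖²
  - (Df(x)+Df(x)ᵀ)f(x)f(x)ᵀM(x)/‖f(x)‖²`,
where the orbital derivative `M′(x)` has entries `∇M_ij(x) ⋅ f(x)`. -/
noncomputable def LMop {n : ℕ} (f : (Fin n → ℝ) → Fin n → ℝ)
    (Df M : (Fin n → ℝ) → Matrix (Fin n) (Fin n) ℝ) (x : Fin n → ℝ) :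
    Matrix (Fin n) (Fin n) ℝ :=
  (Matrix.of fun i j => fderiv ℝ (fun y => M y i j) x (f x))
    + (Df x)ᵀ * M x + M x * Df x
    - (vecEnorm (f x) ^ 2)⁻¹ • (M x * Matrix.vecMulVec (f x) (f x) * (Df x + (Df x)ᵀ))
    - (vecEnorm (f x) ^ 2)⁻¹ • ((Df x + (Df x)ᵀ) * Matrix.vecMulVec (f x) (f x) * M x)

section helpers
variable {n : ℕ} {s : Set ℝ} {t : ℝ}

lemma vvm (a b u : Fin n → ℝ) : Matrix.vecMulVec a b *ᵥ u = (b ⬝ᵥ u) • a := by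
  ext i
  simp [Matrix.mulVec, Matrix.vecMulVec_apply, dotProduct, Finset.mul_sum, mul_assoc,
    mul_comm, mul_left_comm]

lemma mvdot (A : Matrix (Fin n) (Fin n) ℝ) (u x : Fin n → ℝ) :
    (A *ᵥ u) ⬝ᵥ x = u ⬝ᵥ (Aᵀ *ᵥ x) := by
  rw [Matrix.dotProduct_mulVec, Matrix.vecMul_transpose, dotProduct_comm,
    Matrix.dotProduct_mulVec]

lemma vvsym (a : Fin n → ℝ) : (Matrix.vecMulVec a a)ᵀ = Matrix.vecMulVec a a := by
  ext i j; simp [Matrix.vecMulVec_apply, mul_comm]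

lemma Pm_symm (f : (Fin n → ℝ) → Fin n → ℝ) (x : Fin n → ℝ) : (Pm f x)ᵀ = Pm f x := by
  simp [Pm, Matrix.transpose_sub, Matrix.transpose_smul, vvsym]

lemma entry_mul {A B : ℝ → Matrix (Fin n) (Fin n) ℝ} {A' B' : Matrix (Fin n) (Fin n) ℝ}
    (hA : ∀ i j, HasDerivWithinAt (fun τ => A τ i j) (A' i j) s t)
    (hB : ∀ i j, HasDerivWithinAt (fun τ => B τ i j) (B' i j) s t) (i j : Fin n) :
    HasDerivWithinAt (fun τ => (A τ * B τ) i j) ((A' * B t + A t * B') i j) s t := by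
  simp only [Matrix.mul_apply, Matrix.add_apply]
  rw [← Finset.sum_add_distrib]
  exact HasDerivWithinAt.fun_sum fun k _ => ((hA i k).mul (hB k j))

lemma quadDeriv {u v : ℝ → Fin n → ℝ} {A : ℝ → Matrix (Fin n) (Fin n) ℝ}
    {u' v' : Fin n → ℝ} {A' : Matrix (Fin n) (Fin n) ℝ}
    (hu : ∀ i, HasDerivWithinAt (fun τ => u τ i) (u' i) s t)
    (hA : ∀ i j, HasDerivWithinAt (fun τ => A τ i j) (A' i j) s t)
    (hv : ∀ i, HasDerivWithinAt (fun τ => v τ i) (v' i) s t) :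
    HasDerivWithinAt (fun τ => u τ ⬝ᵥ (A τ) *ᵥ (v τ))
      (u' ⬝ᵥ (A t) *ᵥ (v t) + u t ⬝ᵥ (A' *ᵥ (v t) + (A t) *ᵥ v')) s t := by
  have h1 : ∀ i, HasDerivWithinAt (fun τ => ((A τ) *ᵥ (v τ)) i)
      ((A' *ᵥ (v t) + (A t) *ᵥ v') i) s t := by
    intro i
    simp only [Matrix.mulVec, dotProduct, Pi.add_apply]
    rw [← Finset.sum_add_distrib]
    exact HasDerivWithinAt.fun_sum fun j _ => ((hA i j).mul (hv j))
  have h2 := HasDerivWithinAt.fun_sum (u := Finset.univ)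
    (fun i _ => ((hu i).mul (h1 i)))
  simpa only [dotProduct, Finset.sum_add_distrib, Pi.mul_apply] using h2

set_option maxHeartbeats 2000000 in
lemma key (v w p : Fin n → ℝ) (D Mt Mo : Matrix (Fin n) (Fin n) ℝ) (ν : ℝ) (hν : ν ≠ 0)
    (hvv : v ⬝ᵥ v = ν) (hw : w = D *ᵥ v) :
    (D *ᵥ p) ⬝ᵥ (((1 - ν⁻¹ • Matrix.vecMulVec v v) * Mt) *ᵥ (ν⁻¹ • v))
      + p ⬝ᵥ ((((2 * (v ⬝ᵥ w) / ν ^ 2) • Matrix.vecMulVec v v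
            - ν⁻¹ • (Matrix.vecMulVec w v + Matrix.vecMulVec v w)) * Mt
          + (1 - ν⁻¹ • Matrix.vecMulVec v v) * Mo) *ᵥ (ν⁻¹ • v)
        + ((1 - ν⁻¹ • Matrix.vecMulVec v v) * Mt) *ᵥ
            ((-(2 * (v ⬝ᵥ w)) / ν ^ 2) • v + ν⁻¹ • w))
    = p ⬝ᵥ (((1 - ν⁻¹ • Matrix.vecMulVec v v) *
        (Mo + Dᵀ * Mt + Mt * D
          - ν⁻¹ • (Mt * Matrix.vecMulVec v v * (D + Dᵀ))
          - ν⁻¹ • ((D + Dᵀ) * Matrix.vecMulVec v v * Mt))) *ᵥ (ν⁻¹ • v)) := by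
  have hDt : v ⬝ᵥ (Dᵀ *ᵥ v) = v ⬝ᵥ w := by
    rw [← mvdot, dotProduct_comm, hw]
  have hDtm : ∀ z : Fin n → ℝ, v ⬝ᵥ (Dᵀ *ᵥ z) = w ⬝ᵥ z := by
    intro z; rw [← mvdot, hw]
  rw [mvdot]
  simp only [← Matrix.mulVec_mulVec, Matrix.add_mulVec, Matrix.sub_mulVec,
    Matrix.smul_mulVec, Matrix.mulVec_add, Matrix.mulVec_sub, Matrix.mulVec_smul,
    Matrix.one_mulVec, vvm, dotProduct_add, dotProduct_sub,
    dotProduct_smul, add_dotProduct, sub_dotProduct,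
    smul_dotProduct, smul_eq_mul, smul_smul, smul_add, smul_sub,
    hvv, hDt, hDtm, Matrix.mulVec_zero]
  simp only [← Matrix.mulVec_mulVec, ← hw]
  field_simp
  ring

end helpers

set_option maxHeartbeats 4000000 in
/-- Lemma 4.1, equations (4.3) and (4.4): with
`φ₀(t) = f(S_t x)/‖f(S_t x)‖²` and `φ₁` a solution of the variational equation,
`d/dt [φ₁(t)ᵀ P_{S_t x}ᵀ M(S_t x) φ₀(t)] = φ₁(t)ᵀ P_{S_t x}ᵀ (LM(S_t x)) φ₀(t)` and
`d/dt [φ₀(t)ᵀ M(S_t x) P_{S_t x} φ₁(t)] = φ₀(t)ᵀ (LM(S_t x)) P_{S_t x} φ₁(t)`. -/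
theorem stmt10 {n : ℕ} (f : (Fin n → ℝ) → Fin n → ℝ)
    (Df : (Fin n → ℝ) → Matrix (Fin n) (Fin n) ℝ)
    (hf : ContDiff ℝ 1 f)
    (hDf : ∀ y, HasFDerivAt f (LinearMap.toContinuousLinearMap ((Df y).mulVecLin)) y)
    (x : Fin n → ℝ) (hfx : f x ≠ 0)
    -- `g t = S_t x` is the forward trajectory through `x`
    (g : ℝ → Fin n → ℝ) (hg0 : g 0 = x)
    (hg : ∀ t ≥ (0:ℝ), HasDerivWithinAt g (f (g t)) (Set.Ici 0) t)
    (hfg : ∀ t ≥ (0:ℝ), f (g t) ≠ 0)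
    -- `M` is C¹ and symmetric-matrix-valued on an open neighborhood of the forward orbit
    (V : Set (Fin n → ℝ)) (hV : IsOpen V) (hgV : ∀ t ≥ (0:ℝ), g t ∈ V)
    (M : (Fin n → ℝ) → Matrix (Fin n) (Fin n) ℝ)
    (hM : ∀ i j, ContDiffOn ℝ 1 (fun y => M y i j) V)
    (hMsym : ∀ y ∈ V, (M y)ᵀ = M y)
    -- `φ₁` is a solution of the variational equation
    (φ₁ : ℝ → Fin n → ℝ)
    (hφ₁ : ∀ t ≥ (0:ℝ), HasDerivWithinAt φ₁ ((Df (g t)).mulVec (φ₁ t)) (Set.Ici 0) t)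
    -- `φ₀ t = f(S_t x)/‖f(S_t x)‖²`
    (φ₀ : ℝ → Fin n → ℝ) (hφ₀ : ∀ t, φ₀ t = (vecEnorm (f (g t)) ^ 2)⁻¹ • f (g t)) :
    ∀ t ≥ (0:ℝ),
      HasDerivWithinAt
        (fun τ => φ₁ τ ⬝ᵥ ((Pm f (g τ))ᵀ * M (g τ)).mulVec (φ₀ τ))
        (φ₁ t ⬝ᵥ ((Pm f (g t))ᵀ * LMop f Df M (g t)).mulVec (φ₀ t))
        (Set.Ici 0) t ∧
      HasDerivWithinAt
        (fun τ => φ₀ τ ⬝ᵥ (M (g τ) * Pm f (g τ)).mulVec (φ₁ τ))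
        (φ₀ t ⬝ᵥ (LMop f Df M (g t) * Pm f (g t)).mulVec (φ₁ t))
        (Set.Ici 0) t := by
  intro t ht
  have hgVt := hgV t ht
  have hfgt := hfg t ht
  -- squared-norm function
  have hNenorm : ∀ τ, (vecEnorm (f (g τ))) ^ 2 = ∑ i, f (g τ) i ^ 2 := fun τ =>
    Real.sq_sqrt (Finset.sum_nonneg fun i _ => sq_nonneg _)
  have hvv : f (g t) ⬝ᵥ f (g t) = ∑ i, f (g t) i ^ 2 := by
    simp [dotProduct, sq]
  have hν : (∑ i, f (g t) i ^ 2) ≠ 0 := by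
    rw [← hvv]
    exact fun h => hfgt (dotProduct_self_eq_zero.1 h)
  -- derivative of f ∘ g
  have hfog : HasDerivWithinAt (fun τ => f (g τ)) (Df (g t) *ᵥ f (g t)) (Set.Ici 0) t := by
    have := (hDf (g t)).comp_hasDerivWithinAt t (hg t ht)
    exact this
  have hfi : ∀ i, HasDerivWithinAt (fun τ => f (g τ) i) ((Df (g t) *ᵥ f (g t)) i)
      (Set.Ici 0) t := fun i => (hasDerivWithinAt_pi.1 hfog) i
  -- derivative of the squared norm along the flow
  have hNd : HasDerivWithinAt (fun τ => ∑ i, f (g τ) i ^ 2)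
      (2 * (f (g t) ⬝ᵥ (Df (g t) *ᵥ f (g t)))) (Set.Ici 0) t := by
    have h := HasDerivWithinAt.fun_sum (u := Finset.univ) (fun i _ => ((hfi i).pow 2))
    refine h.congr_deriv ?_
    simp only [dotProduct, Finset.mul_sum]
    exact Finset.sum_congr rfl fun i _ => by push_cast; ring
  have hNinv : HasDerivWithinAt (fun τ => (∑ i, f (g τ) i ^ 2)⁻¹)
      (-(2 * (f (g t) ⬝ᵥ (Df (g t) *ᵥ f (g t)))) / (∑ i, f (g t) i ^ 2) ^ 2)
      (Set.Ici 0) t := hNd.inv hν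
  -- entrywise derivative of φ₀
  have hφ₀i : ∀ i, HasDerivWithinAt (fun τ => φ₀ τ i)
      (((-(2 * (f (g t) ⬝ᵥ (Df (g t) *ᵥ f (g t)))) / (∑ i, f (g t) i ^ 2) ^ 2) • f (g t)
        + (∑ i, f (g t) i ^ 2)⁻¹ • (Df (g t) *ᵥ f (g t))) i) (Set.Ici 0) t := by
    intro i
    have e : (fun τ => φ₀ τ i) = fun τ => (∑ j, f (g τ) j ^ 2)⁻¹ * f (g τ) i := by
      funext τ; rw [hφ₀ τ, hNenorm τ]; rfl
    rw [e]
    have := hNinv.mul (hfi i)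
    refine this.congr_deriv ?_
    try simp [smul_eq_mul]
  -- entrywise derivative of Pm ∘ g
  have hPij : ∀ i j, HasDerivWithinAt (fun τ => Pm f (g τ) i j)
      (((2 * (f (g t) ⬝ᵥ (Df (g t) *ᵥ f (g t))) / (∑ i, f (g t) i ^ 2) ^ 2) •
          Matrix.vecMulVec (f (g t)) (f (g t))
        - (∑ i, f (g t) i ^ 2)⁻¹ •
            (Matrix.vecMulVec (Df (g t) *ᵥ f (g t)) (f (g t))
              + Matrix.vecMulVec (f (g t)) (Df (g t) *ᵥ f (g t)))) i j) (Set.Ici 0) t := by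
    intro i j
    have e : (fun τ => Pm f (g τ) i j)
        = fun τ => (1 : Matrix (Fin n) (Fin n) ℝ) i j
            - (∑ k, f (g τ) k ^ 2)⁻¹ * (f (g τ) i * f (g τ) j) := by
      funext τ
      simp [Pm, hNenorm τ, Matrix.sub_apply, Matrix.smul_apply, Matrix.vecMulVec_apply,
        smul_eq_mul]
    rw [e]
    have := (hNinv.mul ((hfi i).mul (hfi j))).const_sub ((1 : Matrix (Fin n) (Fin n) ℝ) i j)
    refine this.congr_deriv ?_
    simp [Matrix.sub_apply, Matrix.smul_apply, Matrix.add_apply, Matrix.vecMulVec_apply,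
      smul_eq_mul]
    try ring
  -- entrywise derivative of M ∘ g
  have hMij : ∀ i j, HasDerivWithinAt (fun τ => M (g τ) i j)
      ((Matrix.of fun i j => fderiv ℝ (fun y => M y i j) (g t) (f (g t))) i j)
      (Set.Ici 0) t := by
    intro i j
    have hca : ContDiffAt ℝ 1 (fun y => M y i j) (g t) :=
      (hM i j).contDiffAt (hV.mem_nhds hgVt)
    have hfd : HasFDerivAt (fun y => M y i j) (fderiv ℝ (fun y => M y i j) (g t)) (g t) :=
      (hca.differentiableAt one_ne_zero).hasFDerivAt
    have := hfd.comp_hasDerivWithinAt t (hg t ht)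
    exact this
  -- entrywise derivative of φ₁
  have hφ₁i : ∀ i, HasDerivWithinAt (fun τ => φ₁ τ i) ((Df (g t) *ᵥ φ₁ t) i)
      (Set.Ici 0) t := fun i => (hasDerivWithinAt_pi.1 (hφ₁ t ht)) i
  -- the main derivative computation
  have main1 : HasDerivWithinAt
      (fun τ => φ₁ τ ⬝ᵥ ((Pm f (g τ))ᵀ * M (g τ)).mulVec (φ₀ τ))
      (φ₁ t ⬝ᵥ ((Pm f (g t))ᵀ * LMop f Df M (g t)).mulVec (φ₀ t)) (Set.Ici 0) t := by
    simp only [Pm_symm]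
    have h := quadDeriv hφ₁i (entry_mul hPij hMij) hφ₀i
    have hval : φ₁ t ⬝ᵥ (Pm f (g t) * LMop f Df M (g t)) *ᵥ (φ₀ t)
        = (Df (g t) *ᵥ φ₁ t) ⬝ᵥ (Pm f (g t) * M (g t)) *ᵥ (φ₀ t)
          + φ₁ t ⬝ᵥ
            ((((2 * (f (g t) ⬝ᵥ (Df (g t) *ᵥ f (g t))) / (∑ i, f (g t) i ^ 2) ^ 2) •
                  Matrix.vecMulVec (f (g t)) (f (g t))
                - (∑ i, f (g t) i ^ 2)⁻¹ •
                    (Matrix.vecMulVec (Df (g t) *ᵥ f (g t)) (f (g t))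
                      + Matrix.vecMulVec (f (g t)) (Df (g t) *ᵥ f (g t)))) * M (g t)
              + Pm f (g t) *
                  (Matrix.of fun i j => fderiv ℝ (fun y => M y i j) (g t) (f (g t))))
                *ᵥ (φ₀ t)
            + (Pm f (g t) * M (g t)) *ᵥ
                ((-(2 * (f (g t) ⬝ᵥ (Df (g t) *ᵥ f (g t)))) / (∑ i, f (g t) i ^ 2) ^ 2) •
                    f (g t)
                  + (∑ i, f (g t) i ^ 2)⁻¹ • (Df (g t) *ᵥ f (g t)))) := by
      rw [hφ₀ t, hNenorm t]
      simp only [Pm, LMop, hNenorm t]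
      exact (key (f (g t)) (Df (g t) *ᵥ f (g t)) (φ₁ t) (Df (g t)) (M (g t))
        (Matrix.of fun i j => fderiv ℝ (fun y => M y i j) (g t) (f (g t)))
        (∑ i, f (g t) i ^ 2) hν hvv rfl).symm
    rw [hval]
    exact h
  refine ⟨main1, ?_⟩
  -- symmetry of the orbital derivative matrix
  have hMosym : (Matrix.of fun i j => fderiv ℝ (fun y => M y i j) (g t) (f (g t)))ᵀ
      = Matrix.of fun i j => fderiv ℝ (fun y => M y i j) (g t) (f (g t)) := by
    ext i j
    have hee : (fun y => M y j i) =ᶠ[nhds (g t)] (fun y => M y i j) := by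
      filter_upwards [hV.mem_nhds hgVt] with y hy
      exact congrFun (congrFun (hMsym y hy) i) j
    simp only [Matrix.transpose_apply, Matrix.of_apply]
    rw [hee.fderiv_eq]
  have hLMsym : (LMop f Df M (g t))ᵀ = LMop f Df M (g t) := by
    simp only [LMop, Matrix.transpose_sub, Matrix.transpose_add, Matrix.transpose_smul,
      Matrix.transpose_mul, Matrix.transpose_transpose, vvsym, hMosym, hMsym _ hgVt]
    simp only [Matrix.mul_assoc]
    abel
  -- transfer (4.3) to (4.4)
  have heq : ∀ τ ∈ Set.Ici (0:ℝ),
      φ₀ τ ⬝ᵥ (M (g τ) * Pm f (g τ)).mulVec (φ₁ τ)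
        = φ₁ τ ⬝ᵥ ((Pm f (g τ))ᵀ * M (g τ)).mulVec (φ₀ τ) := by
    intro τ hτ
    rw [dotProduct_comm, mvdot, Matrix.transpose_mul, hMsym _ (hgV τ hτ)]
  have hveq : φ₀ t ⬝ᵥ (LMop f Df M (g t) * Pm f (g t)).mulVec (φ₁ t)
      = φ₁ t ⬝ᵥ ((Pm f (g t))ᵀ * LMop f Df M (g t)).mulVec (φ₀ t) := by
    rw [dotProduct_comm, mvdot, Matrix.transpose_mul, hLMsym]
  rw [hveq]
  exact main1.congr heq (heq t ht)
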